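/- arXiv:1904.13318 — 4 statements merged into one kernel-verified Lean document; each statement's English description precedes it below -/
import Mathlib

section
/- Let d1, d2, d3 ≥ 1 and let B1, B2, B3 denote the full matrix algebras of operators on the three tensor factors of ℂ^{d1} ⊗ ℂ^{d2} ⊗ ℂ^{d3}. Let A12 be a subalgebra of B1 ⊗ B2 (operators acting as the identity on the third factor) and A23 a subalgebra of B2 ⊗ B3 (operators acting as the identity on the first factor). If every element of A12 commutes with every element of A23, then every element of the support algebra S(A12, B2) commutes with every element of the support algebra S(A23, B2). -/
open scoped Kronecker

namespace QCA

variable {ι : Type} [Fintype ι] [DecidableEq ι]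
variable (F : ι → Type) [∀ i, Fintype (F i)] [∀ i, DecidableEq (F i)]

/-- Configurations: the product basis labels of the lattice Hilbert space `⨂ i, ℂ^(F i)`. -/
abbrev Conf : Type := ∀ i, F i

/-- Operators on the lattice Hilbert space, as matrices in the product basis. -/
abbrev Ops : Type := Matrix (Conf F) (Conf F) ℂ

/-- `A` is localized on the region `R` if it has the form `B ⊗ 1` with respect to the
splitting `R | Rᶜ` of the tensor factors (entrywise characterization). -/
def Localized (A : Ops F) (R : Set ι) : Prop :=
  (∀ x y : Conf F, A x y ≠ 0 → ∀ i ∉ R, x i = y i) ∧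
  (∀ x y x' y' : Conf F, (∀ i ∈ R, x i = x' i) → (∀ i ∈ R, y i = y' i) →
      (∀ i ∉ R, x i = y i) → (∀ i ∉ R, x' i = y' i) → A x y = A x' y')

/-- Heisenberg evolution `A ↦ U* A U`. -/
noncomputable def heis (U A : Ops F) : Ops F := star U * A * U

/-- The support algebra `S(𝒮, R)`: the smallest subalgebra of operators localized on `R`
such that `𝒮` is contained in (the algebra generated by) it together with the full algebra
of operators localized on `Rᶜ`. -/
noncomputable def supportAlgebra (S : Set (Ops F)) (R : Set ι) : Subalgebra ℂ (Ops F) :=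
  sInf {C : Subalgebra ℂ (Ops F) |
    (C : Set (Ops F)) ⊆ {A | Localized F A R} ∧
    S ⊆ ↑(Algebra.adjoin ℂ ((C : Set (Ops F)) ∪ {A | Localized F A Rᶜ}))}

section Ring

variable {M : ℕ} (sector : ZMod M → Finset ι)

/-- `U` is a nearest-neighbour QCA for the ring of `M` (super)cells described by `sector`:
`U` is unitary, and conjugation by `U` maps operators localized on cell `k` to operators
localized on cells `{k-1, k, k+1}`. -/
def IsRingQCA (U : Ops F) : Prop :=
  U ∈ Matrix.unitaryGroup (Conf F) ℂ ∧
  ∀ (k : ZMod M) (A : Ops F), Localized F A ↑(sector k) →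
    Localized F (heis F U A) (↑(sector (k - 1)) ∪ ↑(sector k) ∪ ↑(sector (k + 1)))

/-- The even support algebra `R_k = S(u(A_k ⊗ A_{k+1}), A_{k-1} ⊗ A_k)` (`k` an even site). -/
noncomputable def REven (U : Ops F) (k : ZMod M) : Subalgebra ℂ (Ops F) :=
  supportAlgebra F (heis F U '' {A | Localized F A (↑(sector k) ∪ ↑(sector (k + 1)))})
    (↑(sector (k - 1)) ∪ ↑(sector k))

/-- The odd support algebra `R_{k+1} = S(u(A_k ⊗ A_{k+1}), A_{k+1} ⊗ A_{k+2})` (`k` even). -/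
noncomputable def ROdd (U : Ops F) (k : ZMod M) : Subalgebra ℂ (Ops F) :=
  supportAlgebra F (heis F U '' {A | Localized F A (↑(sector k) ∪ ↑(sector (k + 1)))})
    (↑(sector (k + 1)) ∪ ↑(sector (k + 2)))

/-- The Hilbert space dimension of the (super)cell `k`. -/
def siteDim (k : ZMod M) : ℕ := ∏ i ∈ sector k, Fintype.card (F i)

/-- `r` with `C ≅ M_r(ℂ)`, recovered as the square root of the linear dimension of `C`. -/
noncomputable def rdim (C : Subalgebra ℂ (Ops F)) : ℕ := Nat.sqrt (Module.finrank ℂ C)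

/-- The GNVW index `ind[U] = r_{2n} / d_{2n}`, evaluated at the even site `2n = 0`. -/
noncomputable def ringIndex (U : Ops F) : ℚ :=
  (rdim F (REven F sector U 0) : ℚ) / (siteDim F sector 0 : ℚ)

end Ring

/-- The standard ring structure: one site per cell. -/
def stdSector (N : ℕ) : ZMod N → Finset (ZMod N) := fun n => {n}

/-- The embedding of a one-site operator at site `i` into the lattice algebra. -/
noncomputable def embedAt (i : ι) (B : Matrix (F i) (F i) ℂ) : Ops F :=
  fun x y => (if ∀ j, j ≠ i → x j = y j then 1 else 0) * B (x i) (y i)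

/-- Pairing of configurations of two parallel lattices. -/
def confPairEquiv (G : ι → Type) [∀ i, Fintype (G i)] [∀ i, DecidableEq (G i)] :
    (Conf F × Conf G) ≃ Conf (fun i => F i × G i) where
  toFun p := fun i => (p.1 i, p.2 i)
  invFun x := (fun i => (x i).1, fun i => (x i).2)
  left_inv _ := rfl
  right_inv _ := rfl

/-- The tensor product `A ⊗ B` of operators on two parallel lattices, as an operator on the
lattice whose site `i` carries the qudit `F i × G i`. -/
noncomputable def tensorOps (G : ι → Type) [∀ i, Fintype (G i)] [∀ i, DecidableEq (G i)]
    (A : Ops F) (B : Ops G) : Ops (fun i => F i × G i) :=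
  Matrix.reindex (confPairEquiv F G) (confPairEquiv F G) (A ⊗ₖ B)


section Aux

theorem localized_mono {A : Ops F} {R R' : Set ι} (hA : Localized F A R) (h : R ⊆ R') :
    Localized F A R' := by
  obtain ⟨h1, h2⟩ := hA
  constructor
  · intro x y hxy i hi
    exact h1 x y hxy i fun hiR => hi (h hiR)
  · intro x y x' y' hx hy hxy hxy'
    by_cases hoff : ∀ i ∉ R, x i = y i
    · refine h2 x y x' y' (fun i hi => hx i (h hi)) (fun i hi => hy i (h hi)) hoff ?_
      intro i hi
      by_cases hiR' : i ∈ R'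
      · rw [← hx i hiR', ← hy i hiR']; exact hoff i hi
      · exact hxy' i hiR'
    · push_neg at hoff
      obtain ⟨i, hiR, hine⟩ := hoff
      have hxA : A x y = 0 := by
        by_contra hne; exact hine (h1 x y hne i hiR)
      have hx'A : A x' y' = 0 := by
        by_contra hne
        have hiR' : i ∈ R' := by
          by_contra hiR'
          exact hine (hxy i hiR')
        exact hine (by rw [hx i hiR', hy i hiR']; exact h1 x' y' hne i hiR)
      rw [hxA, hx'A]

open Classical in
/-- An auxiliary self-inverse permutation of configurations. -/
noncomputable def swapOffEquiv (R : Set ι) (x x' : Conf F) : Conf F ≃ Conf F where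
  toFun z := fun i => if i ∈ R then z i else Equiv.swap (x i) (x' i) (z i)
  invFun z := fun i => if i ∈ R then z i else Equiv.swap (x i) (x' i) (z i)
  left_inv z := by
    funext i
    by_cases h : i ∈ R <;> simp [h]
  right_inv z := by
    funext i
    by_cases h : i ∈ R <;> simp [h]

theorem localized_mul {A B : Ops F} {R : Set ι} (hA : Localized F A R)
    (hB : Localized F B R) : Localized F (A * B) R := by
  classical
  constructor
  · intro x y hxy i hi
    rw [Matrix.mul_apply] at hxy
    obtain ⟨z, _, hz⟩ := Finset.exists_ne_zero_of_sum_ne_zero hxy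
    rw [hA.1 x z (left_ne_zero_of_mul hz) i hi, hB.1 z y (right_ne_zero_of_mul hz) i hi]
  · intro x y x' y' hx hy hxy hxy'
    rw [Matrix.mul_apply, Matrix.mul_apply]
    apply Fintype.sum_equiv (swapOffEquiv F R x x')
    intro z
    by_cases hz : ∀ i ∉ R, z i = x i
    · have hzR : ∀ i ∈ R, z i = (swapOffEquiv F R x x' z) i := by
        intro i hi; simp [swapOffEquiv, hi]
      have hzoff : ∀ i ∉ R, x' i = (swapOffEquiv F R x x' z) i := by
        intro i hi; simp [swapOffEquiv, hi, hz i hi]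
      rw [hA.2 x z x' _ hx hzR (fun i hi => (hz i hi).symm) hzoff,
        hB.2 z y _ y' hzR hy (fun i hi => by rw [hz i hi]; exact hxy i hi)
          (fun i hi => by rw [← hzoff i hi]; exact hxy' i hi)]
    · push_neg at hz
      obtain ⟨i, hiR, hine⟩ := hz
      have h1 : A x z = 0 := by
        by_contra h; exact hine (hA.1 x z h i hiR).symm
      have h2 : A x' (swapOffEquiv F R x x' z) = 0 := by
        by_contra h
        have h3 := hA.1 x' _ h i hiR
        simp only [swapOffEquiv, Equiv.coe_fn_mk, if_neg hiR] at h3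
        have h4 := congrArg (Equiv.swap (x i) (x' i)) h3
        rw [Equiv.swap_apply_right, Equiv.swap_apply_self] at h4
        exact hine h4.symm
      rw [h1, h2, zero_mul, zero_mul]

theorem localized_scalar (c : ℂ) (R : Set ι) :
    Localized F (algebraMap ℂ (Ops F) c) R := by
  constructor
  · intro x y hxy i hi
    have hxy' : x = y := by
      by_contra h
      rw [Matrix.algebraMap_matrix_apply, if_neg h] at hxy
      exact hxy rfl
    rw [hxy']
  · intro x y x' y' hx hy hxy hxy'
    rw [Matrix.algebraMap_matrix_apply, Matrix.algebraMap_matrix_apply]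
    have hiff : x = y ↔ x' = y' := by
      constructor
      · intro h; funext i
        by_cases hi : i ∈ R
        · rw [← hx i hi, ← hy i hi, h]
        · exact hxy' i hi
      · intro h; funext i
        by_cases hi : i ∈ R
        · rw [hx i hi, hy i hi, h]
        · exact hxy i hi
    by_cases h : x = y
    · rw [if_pos h, if_pos (hiff.mp h)]
    · rw [if_neg h, if_neg fun hh => h (hiff.mpr hh)]

theorem localized_zero (R : Set ι) : Localized F 0 R := by
  constructor
  · intro x y hxy _ _
    exact absurd rfl hxy
  · intro _ _ _ _ _ _ _ _
    rfl

theorem localized_add {A B : Ops F} {R : Set ι} (hA : Localized F A R)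
    (hB : Localized F B R) : Localized F (A + B) R := by
  constructor
  · intro x y hxy i hi
    rw [Matrix.add_apply] at hxy
    by_cases h : A x y = 0
    · rw [h, zero_add] at hxy; exact hB.1 x y hxy i hi
    · exact hA.1 x y h i hi
  · intro x y x' y' hx hy hxy hxy'
    rw [Matrix.add_apply, Matrix.add_apply, hA.2 x y x' y' hx hy hxy hxy',
      hB.2 x y x' y' hx hy hxy hxy']

/-- The subalgebra of operators localized on `R`. -/
noncomputable def locAlg (R : Set ι) : Subalgebra ℂ (Ops F) where
  carrier := {A | Localized F A R}
  mul_mem' := fun ha hb => localized_mul F ha hb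
  add_mem' := fun ha hb => localized_add F ha hb
  one_mem' := by
    have := localized_scalar F (1 : ℂ) R
    rwa [map_one] at this
  zero_mem' := localized_zero F R
  algebraMap_mem' := fun c => localized_scalar F c R

@[simp] theorem mem_locAlg {A : Ops F} {R : Set ι} :
    A ∈ locAlg F R ↔ Localized F A R := Iff.rfl

/-- A matrix unit at site `i`, extended by the identity pattern. -/
noncomputable def unitAt (i : ι) (k l : F i) : Ops F :=
  fun x y => if (∀ j, j ≠ i → x j = y j) ∧ x i = k ∧ y i = l then 1 else 0

/-- The `(k,l)` coefficient of `a` with respect to the factorization at site `i`. -/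
noncomputable def coef (a : Ops F) (i : ι) (k l : F i) : Ops F :=
  fun x y => (if x i = y i then 1 else 0) *
    a (Function.update x i k) (Function.update y i l)

theorem localized_unitAt (i : ι) (k l : F i) :
    Localized F (unitAt F i k l) ({i} : Set ι) := by
  constructor
  · intro x y hxy j hj
    have hj' : j ≠ i := fun h => hj (by simp [h])
    by_cases h : (∀ j, j ≠ i → x j = y j) ∧ x i = k ∧ y i = l
    · exact h.1 j hj'
    · exact absurd (if_neg h) hxy
  · intro x y x' y' hx hy hxy hxy'
    have hxi : x i = x' i := hx i rfl
    have hyi : y i = y' i := hy i rfl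
    have hoff : ∀ j, j ≠ i → (x j = y j ↔ x' j = y' j) := by
      intro j hj
      have hj' : j ∉ ({i} : Set ι) := by simpa using hj
      exact iff_of_true (hxy j hj') (hxy' j hj')
    refine if_congr ?_ rfl rfl
    constructor
    · rintro ⟨h1, h2, h3⟩
      exact ⟨fun j hj => (hoff j hj).mp (h1 j hj), hxi ▸ h2, hyi ▸ h3⟩
    · rintro ⟨h1, h2, h3⟩
      exact ⟨fun j hj => (hoff j hj).mpr (h1 j hj), hxi.symm ▸ h2, hyi.symm ▸ h3⟩

theorem localized_coef {a : Ops F} {R : Set ι} (ha : Localized F a R) {i : ι}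
    (hi : i ∈ R) (k l : F i) : Localized F (coef F a i k l) (R \ {i}) := by
  constructor
  · intro x y hxy j hj
    have hind : x i = y i ∧ a (Function.update x i k) (Function.update y i l) ≠ 0 := by
      by_cases h : x i = y i
      · refine ⟨h, ?_⟩
        intro h0
        apply hxy
        show (if x i = y i then (1:ℂ) else 0) * _ = 0
        rw [h0, mul_zero]
      · refine absurd ?_ hxy
        show (if x i = y i then (1:ℂ) else 0) * _ = 0
        rw [if_neg h, zero_mul]
    by_cases hji : j = i
    · subst hji; exact hind.1
    · have hjR : j ∉ R := fun h => hj ⟨h, by simpa using hji⟩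
      have h5 := ha.1 _ _ hind.2 j hjR
      rwa [Function.update_of_ne hji, Function.update_of_ne hji] at h5
  · intro x y x' y' hx hy hxy hxy'
    have hiOff : i ∉ R \ {i} := fun h => h.2 rfl
    have h1 : x i = y i := hxy i hiOff
    have h2 : x' i = y' i := hxy' i hiOff
    have key : a (Function.update x i k) (Function.update y i l)
        = a (Function.update x' i k) (Function.update y' i l) := by
      apply ha.2
      · intro j hj
        by_cases hji : j = i
        · subst hji; simp
        · rw [Function.update_of_ne hji, Function.update_of_ne hji]
          exact hx j ⟨hj, by simpa using hji⟩
      · intro j hj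
        by_cases hji : j = i
        · subst hji; simp
        · rw [Function.update_of_ne hji, Function.update_of_ne hji]
          exact hy j ⟨hj, by simpa using hji⟩
      · intro j hj
        have hji : j ≠ i := fun h => hj (h ▸ hi)
        rw [Function.update_of_ne hji, Function.update_of_ne hji]
        exact hxy j fun h => hj h.1
      · intro j hj
        have hji : j ≠ i := fun h => hj (h ▸ hi)
        rw [Function.update_of_ne hji, Function.update_of_ne hji]
        exact hxy' j fun h => hj h.1
    show (if x i = y i then (1:ℂ) else 0) * _ = (if x' i = y' i then (1:ℂ) else 0) * _
    rw [if_pos h1, if_pos h2, key]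

theorem sum_decomp (a : Ops F) (i : ι) :
    ∑ k : F i, ∑ l : F i, unitAt F i k l * coef F a i k l = a := by
  classical
  ext x y
  have hterm : ∀ k l : F i, (unitAt F i k l * coef F a i k l) x y
      = if x i = k then (if y i = l then a x y else 0) else 0 := by
    intro k l
    rw [Matrix.mul_apply]
    rw [Finset.sum_eq_single (Function.update x i l)]
    · have hcoef : coef F a i k l (Function.update x i l) y
          = (if l = y i then (1:ℂ) else 0) *
            a (Function.update x i k) (Function.update y i l) := by
        show (if Function.update x i l i = y i then (1:ℂ) else 0) * _ = _
        rw [Function.update_self, Function.update_idem]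
      by_cases hk : x i = k
      · have hu : unitAt F i k l x (Function.update x i l) = 1 := by
          refine if_pos ⟨fun j hj => (Function.update_of_ne hj l x).symm, hk,
            Function.update_self i l x⟩
        rw [hu, one_mul, hcoef, if_pos hk]
        by_cases hl : y i = l
        · rw [if_pos hl.symm, one_mul, if_pos hl, ← hk, ← hl,
            Function.update_eq_self, Function.update_eq_self]
        · rw [if_neg fun h => hl h.symm, zero_mul, if_neg hl]
      · have hu : unitAt F i k l x (Function.update x i l) = 0 := by
          refine if_neg ?_
          rintro ⟨-, h2, -⟩; exact hk h2
        rw [hu, zero_mul, if_neg hk]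
    · intro z _ hz
      have hu : unitAt F i k l x z = 0 := by
        refine if_neg ?_
        rintro ⟨h1, h2, h3⟩
        apply hz
        funext j
        by_cases hji : j = i
        · subst hji; rw [Function.update_self, h3]
        · rw [Function.update_of_ne hji, h1 j hji]
      rw [hu, zero_mul]
    · intro h; exact absurd (Finset.mem_univ _) h
  simp only [Matrix.sum_apply, hterm]
  have hin : ∀ k : F i, ∑ l : F i,
      (if x i = k then (if y i = l then a x y else 0) else 0)
      = if x i = k then a x y else 0 := by
    intro k
    by_cases h : x i = k
    · simp only [if_pos h]
      rw [Finset.sum_ite_eq, if_pos (Finset.mem_univ _)]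
    · simp [if_neg h]
  simp only [hin]
  rw [Finset.sum_ite_eq, if_pos (Finset.mem_univ _)]

/-- Updating one coordinate by a permutation is a permutation of configurations. -/
def updEquiv (i : ι) (e : F i ≃ F i) : Conf F ≃ Conf F where
  toFun z := Function.update z i (e (z i))
  invFun z := Function.update z i (e.symm (z i))
  left_inv z := by
    funext j
    by_cases hj : j = i
    · subst hj; simp
    · simp [Function.update_of_ne hj]
  right_inv z := by
    funext j
    by_cases hj : j = i
    · subst hj; simp
    · simp [Function.update_of_ne hj]

theorem notMem_compl_self (i : ι) : i ∉ (({i} : Set ι)ᶜ) := by simp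

theorem coef_mul_apply (a c : Ops F) (i : ι) (hc : Localized F c (({i} : Set ι)ᶜ))
    (k l : F i) (x y : Conf F) :
    (coef F a i k l * c) x y =
      if x i = y i then (a * c) (Function.update x i k) (Function.update y i l) else 0 := by
  classical
  rw [Matrix.mul_apply]
  have hcoef : ∀ z : Conf F, coef F a i k l x z = (if x i = z i then (1:ℂ) else 0) *
      a (Function.update x i k) (Function.update z i l) := fun z => rfl
  by_cases hxy : x i = y i
  · rw [if_pos hxy, Matrix.mul_apply]
    apply Fintype.sum_equiv (updEquiv F i (Equiv.swap (x i) l))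
    intro z
    have hσ : updEquiv F i (Equiv.swap (x i) l) z
        = Function.update z i (Equiv.swap (x i) l (z i)) := rfl
    by_cases hz : x i = z i
    · have hσ' : updEquiv F i (Equiv.swap (x i) l) z = Function.update z i l := by
        rw [hσ, ← hz, Equiv.swap_apply_left]
      have hcz : c z y = c (Function.update z i l) (Function.update y i l) := by
        apply hc.2
        · intro j hj
          rw [Function.update_of_ne (by simpa using hj)]
        · intro j hj
          rw [Function.update_of_ne (by simpa using hj)]
        · intro j hj
          have hji : j = i := by simpa using hj
          subst hji
          rw [← hz]; exact hxy
        · intro j hj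
          have hji : j = i := by simpa using hj
          subst hji
          rw [Function.update_self, Function.update_self]
      rw [hcoef, if_pos hz, one_mul, hσ', hcz]
    · have hc0 : c (updEquiv F i (Equiv.swap (x i) l) z) (Function.update y i l) = 0 := by
        by_contra h
        have h3 := hc.1 _ _ h i (notMem_compl_self i)
        rw [hσ, Function.update_self, Function.update_self] at h3
        have h4 := congrArg (Equiv.swap (x i) l) h3
        rw [Equiv.swap_apply_self, Equiv.swap_apply_right] at h4
        exact hz h4.symm
      rw [hcoef, if_neg hz, zero_mul, zero_mul, hc0, mul_zero]
  · rw [if_neg hxy]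
    apply Finset.sum_eq_zero
    intro z _
    by_cases hz : x i = z i
    · have hc0 : c z y = 0 := by
        by_contra h
        exact hxy (hz.trans (hc.1 z y h i (notMem_compl_self i)))
      rw [hc0, mul_zero]
    · rw [hcoef, if_neg hz, zero_mul, zero_mul]

theorem mul_coef_apply (a c : Ops F) (i : ι) (hc : Localized F c (({i} : Set ι)ᶜ))
    (k l : F i) (x y : Conf F) :
    (c * coef F a i k l) x y =
      if x i = y i then (c * a) (Function.update x i k) (Function.update y i l) else 0 := by
  classical
  rw [Matrix.mul_apply]
  have hcoef : ∀ w : Conf F, coef F a i k l w y = (if w i = y i then (1:ℂ) else 0) *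
      a (Function.update w i k) (Function.update y i l) := fun w => rfl
  by_cases hxy : x i = y i
  · rw [if_pos hxy, Matrix.mul_apply]
    apply Fintype.sum_equiv (updEquiv F i (Equiv.swap (y i) k))
    intro w
    have hσ : updEquiv F i (Equiv.swap (y i) k) w
        = Function.update w i (Equiv.swap (y i) k (w i)) := rfl
    by_cases hw : w i = y i
    · have hσ' : updEquiv F i (Equiv.swap (y i) k) w = Function.update w i k := by
        rw [hσ, hw, Equiv.swap_apply_left]
      have hcw : c x w = c (Function.update x i k) (Function.update w i k) := by
        apply hc.2
        · intro j hj
          rw [Function.update_of_ne (by simpa using hj)]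
        · intro j hj
          rw [Function.update_of_ne (by simpa using hj)]
        · intro j hj
          have hji : j = i := by simpa using hj
          subst hji
          rw [hw]; exact hxy
        · intro j hj
          have hji : j = i := by simpa using hj
          subst hji
          rw [Function.update_self, Function.update_self]
      rw [hcoef, if_pos hw, one_mul, hσ', hcw]
    · have hc0 : c (Function.update x i k) (updEquiv F i (Equiv.swap (y i) k) w) = 0 := by
        by_contra h
        have h3 := hc.1 _ _ h i (notMem_compl_self i)
        rw [hσ, Function.update_self, Function.update_self] at h3
        have h4 := congrArg (Equiv.swap (y i) k) h3.symm
        rw [Equiv.swap_apply_self, Equiv.swap_apply_right] at h4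
        exact hw h4
      rw [hcoef, if_neg hw, zero_mul, mul_zero, hc0, zero_mul]
  · rw [if_neg hxy]
    apply Finset.sum_eq_zero
    intro w _
    by_cases hcw : c x w = 0
    · rw [hcw, zero_mul]
    · have hxw : x i = w i := hc.1 x w hcw i (notMem_compl_self i)
      rw [hcoef, if_neg (fun h => hxy (hxw.trans h)), zero_mul, mul_zero]

theorem coef_commute (a c : Ops F) (i : ι) (hc : Localized F c (({i} : Set ι)ᶜ))
    (hac : a * c = c * a) (k l : F i) :
    coef F a i k l * c = c * coef F a i k l := by
  ext x y
  rw [coef_mul_apply F a c i hc, mul_coef_apply F a c i hc, hac]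

end Aux

/-- If every element of a subalgebra `A12` of `B1 ⊗ B2` commutes with every
element of a subalgebra `A23` of `B2 ⊗ B3`, then the support algebras `S(A12, B2)` and
`S(A23, B2)` commute elementwise. -/
theorem supportAlgebras_commute (d : Fin 3 → ℕ) (hd : ∀ i, 1 ≤ d i)
    (A12 A23 : Subalgebra ℂ (Ops (fun i : Fin 3 => Fin (d i))))
    (h12 : (A12 : Set (Ops (fun i : Fin 3 => Fin (d i)))) ⊆
      {A | Localized (fun i : Fin 3 => Fin (d i)) A ({0, 1} : Set (Fin 3))})
    (h23 : (A23 : Set (Ops (fun i : Fin 3 => Fin (d i)))) ⊆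
      {A | Localized (fun i : Fin 3 => Fin (d i)) A ({1, 2} : Set (Fin 3))})
    (hcomm : ∀ a ∈ A12, ∀ b ∈ A23, a * b = b * a) :
    ∀ x ∈ supportAlgebra (fun i : Fin 3 => Fin (d i)) (A12 : Set (Ops (fun i : Fin 3 => Fin (d i))))
        ({1} : Set (Fin 3)),
      ∀ y ∈ supportAlgebra (fun i : Fin 3 => Fin (d i)) (A23 : Set (Ops (fun i : Fin 3 => Fin (d i))))
        ({1} : Set (Fin 3)),
        x * y = y * x := by
  classical
  intro x hx y hy
  have h0mem : (0 : Fin 3) ∈ ({0, 1} : Set (Fin 3)) := Or.inl rfl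
  have h2mem : (2 : Fin 3) ∈ ({1, 2} : Set (Fin 3)) := Or.inr rfl
  have hsub01 : ({0, 1} : Set (Fin 3)) \ {0} ⊆ ({1} : Set (Fin 3)) := by
    rintro j ⟨hj1, hj2⟩
    rcases hj1 with h | h
    · exact absurd h hj2
    · exact h
  have hsub12 : ({1, 2} : Set (Fin 3)) \ {2} ⊆ ({1} : Set (Fin 3)) := by
    rintro j ⟨hj1, hj2⟩
    rcases hj1 with h | h
    · exact h
    · exact absurd h hj2
  have h0c : ({0} : Set (Fin 3)) ⊆ (({1} : Set (Fin 3)))ᶜ := by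
    intro j hj
    simp only [Set.mem_singleton_iff] at hj
    subst hj
    simp only [Set.mem_compl_iff, Set.mem_singleton_iff]
    decide
  have h2c : ({2} : Set (Fin 3)) ⊆ (({1} : Set (Fin 3)))ᶜ := by
    intro j hj
    simp only [Set.mem_singleton_iff] at hj
    subst hj
    simp only [Set.mem_compl_iff, Set.mem_singleton_iff]
    decide
  have h12c : ({1, 2} : Set (Fin 3)) ⊆ (({0} : Set (Fin 3)))ᶜ := by
    intro j hj
    simp only [Set.mem_compl_iff, Set.mem_singleton_iff]
    rcases hj with rfl | h
    · decide
    · simp only [Set.mem_singleton_iff] at h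
      subst h
      decide
  have h1c2 : ({1} : Set (Fin 3)) ⊆ (({2} : Set (Fin 3)))ᶜ := by
    intro j hj
    simp only [Set.mem_singleton_iff] at hj
    subst hj
    simp only [Set.mem_compl_iff, Set.mem_singleton_iff]
    decide
  have key12 : supportAlgebra (fun i : Fin 3 => Fin (d i))
        (A12 : Set (Ops (fun i : Fin 3 => Fin (d i)))) ({1} : Set (Fin 3)) ≤
      locAlg (fun i : Fin 3 => Fin (d i)) ({1} : Set (Fin 3)) ⊓
        Subalgebra.centralizer ℂ (A23 : Set (Ops (fun i : Fin 3 => Fin (d i)))) := by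
    apply sInf_le
    refine ⟨fun B hB => (Algebra.mem_inf.mp hB).1, ?_⟩
    intro a ha
    rw [SetLike.mem_coe, ← sum_decomp (fun i : Fin 3 => Fin (d i)) a 0]
    refine Subalgebra.sum_mem _ fun k _ => Subalgebra.sum_mem _ fun l _ =>
      mul_mem ?_ ?_
    · exact Algebra.subset_adjoin (Set.mem_union_right _
        (localized_mono _ (localized_unitAt (fun i : Fin 3 => Fin (d i)) 0 k l) h0c))
    · refine Algebra.subset_adjoin (Set.mem_union_left _ ?_)
      rw [SetLike.mem_coe, Algebra.mem_inf]
      refine ⟨localized_mono _ (localized_coef _ (h12 ha) h0mem k l) hsub01, ?_⟩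
      rw [Subalgebra.mem_centralizer_iff]
      intro g hg
      exact (coef_commute _ a g 0 (localized_mono _ (h23 hg) h12c)
        (hcomm a ha g hg) k l).symm
  have key23 : supportAlgebra (fun i : Fin 3 => Fin (d i))
        (A23 : Set (Ops (fun i : Fin 3 => Fin (d i)))) ({1} : Set (Fin 3)) ≤
      locAlg (fun i : Fin 3 => Fin (d i)) ({1} : Set (Fin 3)) ⊓
        Subalgebra.centralizer ℂ
          ((supportAlgebra (fun i : Fin 3 => Fin (d i))
            (A12 : Set (Ops (fun i : Fin 3 => Fin (d i)))) ({1} : Set (Fin 3)) :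
              Subalgebra ℂ (Ops (fun i : Fin 3 => Fin (d i)))) :
            Set (Ops (fun i : Fin 3 => Fin (d i)))) := by
    apply sInf_le
    refine ⟨fun B hB => (Algebra.mem_inf.mp hB).1, ?_⟩
    intro c hc
    rw [SetLike.mem_coe, ← sum_decomp (fun i : Fin 3 => Fin (d i)) c 2]
    refine Subalgebra.sum_mem _ fun k _ => Subalgebra.sum_mem _ fun l _ =>
      mul_mem ?_ ?_
    · exact Algebra.subset_adjoin (Set.mem_union_right _
        (localized_mono _ (localized_unitAt (fun i : Fin 3 => Fin (d i)) 2 k l) h2c))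
    · refine Algebra.subset_adjoin (Set.mem_union_left _ ?_)
      rw [SetLike.mem_coe, Algebra.mem_inf]
      refine ⟨localized_mono _ (localized_coef _ (h23 hc) h2mem k l) hsub12, ?_⟩
      rw [Subalgebra.mem_centralizer_iff]
      intro g hg
      have hgC := key12 hg
      rw [Algebra.mem_inf] at hgC
      have hcg : c * g = g * c := (Subalgebra.mem_centralizer_iff (R := ℂ)).mp hgC.2 c hc
      exact (coef_commute _ c g 2 (localized_mono _ hgC.1 h1c2) hcg k l).symm
  have hyC := key23 hy
  rw [Algebra.mem_inf] at hyC
  exact (Subalgebra.mem_centralizer_iff (R := ℂ)).mp hyC.2 x hx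

end QCA
end

section
/- Let Λ be a finite index set, H = ⨂_{n∈Λ} ℂ^{d_n}, and N : Λ → (subsets of Λ) a neighbourhood map. Suppose the unitary U on H is locality preserving for N: for every n ∈ Λ and every operator A localized on site n, U*AU is localized on N(n). Then the inverse is locality preserving for the transposed neighbourhood map: for every n ∈ Λ and every operator A localized on site n, U A U* is localized on N̄(n) := {m ∈ Λ : n ∈ N(m)}. -/
open scoped Kronecker

namespace QCA

variable {ι : Type} [Fintype ι] [DecidableEq ι]
variable (F : ι → Type) [∀ i, Fintype (F i)] [∀ i, DecidableEq (F i)]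

section Aux

lemma localized_embedAt (i : ι) (B : Matrix (F i) (F i) ℂ) :
    Localized F (embedAt F i B) ({i} : Set ι) := by
  constructor
  · intro x y hxy j hj
    have hji : j ≠ i := by simpa using hj
    by_contra hne
    apply hxy
    unfold embedAt
    have : ¬ (∀ k, k ≠ i → x k = y k) := fun hk => hne (hk j hji)
    simp [this]
  · intro x y x' y' hx hy hxy hxy'
    have h1 : ∀ j, j ≠ i → x j = y j := fun j hj => hxy j (by simpa using hj)
    have h2 : ∀ j, j ≠ i → x' j = y' j := fun j hj => hxy' j (by simpa using hj)
    unfold embedAt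
    rw [hx i rfl, hy i rfl]
    have c1 : (∀ j, ¬ j = i → x j = y j) := h1
    have c2 : (∀ j, ¬ j = i → x' j = y' j) := h2
    rw [if_pos c1, if_pos c2]

lemma mul_comm_of_disjoint (A B : Ops F) (R S : Set ι)
    (hA : Localized F A R) (hB : Localized F B S)
    (hRS : ∀ i, ¬(i ∈ R ∧ i ∈ S)) : A * B = B * A := by
  classical
  ext x y
  rw [Matrix.mul_apply, Matrix.mul_apply]
  set z : Conf F := fun i => if i ∈ R then y i else x i with hz
  set z' : Conf F := fun i => if i ∈ S then y i else x i with hz'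
  have h1 : ∑ w, A x w * B w y = A x z * B z y := by
    apply Finset.sum_eq_single z
    · intro w _ hw
      by_contra hne
      have hA0 : A x w ≠ 0 := fun h0 => hne (by rw [h0, zero_mul])
      have hB0 : B w y ≠ 0 := fun h0 => hne (by rw [h0, mul_zero])
      apply hw
      funext i
      by_cases hiR : i ∈ R
      · have hiS : i ∉ S := fun hs => hRS i ⟨hiR, hs⟩
        rw [hz]; simp only [hiR, if_true]
        exact hB.1 w y hB0 i hiS
      · rw [hz]; simp only [hiR, if_false]
        exact (hA.1 x w hA0 i hiR).symm
    · intro hnot; exact absurd (Finset.mem_univ z) hnot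
  have h2 : ∑ w, B x w * A w y = B x z' * A z' y := by
    apply Finset.sum_eq_single z'
    · intro w _ hw
      by_contra hne
      have hB0 : B x w ≠ 0 := fun h0 => hne (by rw [h0, zero_mul])
      have hA0 : A w y ≠ 0 := fun h0 => hne (by rw [h0, mul_zero])
      apply hw
      funext i
      by_cases hiS : i ∈ S
      · have hiR : i ∉ R := fun hr => hRS i ⟨hr, hiS⟩
        rw [hz']; simp only [hiS, if_true]
        exact hA.1 w y hA0 i hiR
      · rw [hz']; simp only [hiS, if_false]
        exact (hB.1 x w hB0 i hiS).symm
    · intro hnot; exact absurd (Finset.mem_univ z') hnot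
  rw [h1, h2]
  by_cases hxy : ∀ i, i ∉ R → i ∉ S → x i = y i
  · have eA : A x z = A z' y := by
      apply hA.2
      · intro i hi
        have hiS : i ∉ S := fun hs => hRS i ⟨hi, hs⟩
        rw [hz']; simp [hiS]
      · intro i hi; rw [hz]; simp [hi]
      · intro i hi; rw [hz]; simp [hi]
      · intro i hi
        by_cases hiS : i ∈ S
        · rw [hz']; simp [hiS]
        · rw [hz']; simp only [hiS, if_false]; exact hxy i hi hiS
    have eB : B z y = B x z' := by
      apply hB.2
      · intro i hi
        have hiR : i ∉ R := fun hr => hRS i ⟨hr, hi⟩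
        rw [hz]; simp [hiR]
      · intro i hi; rw [hz']; simp [hi]
      · intro i hi
        by_cases hiR : i ∈ R
        · rw [hz]; simp [hiR]
        · rw [hz]; simp only [hiR, if_false]; exact hxy i hiR hi
      · intro i hi; rw [hz']; simp [hi]
    rw [eA, eB]; ring
  · push_neg at hxy
    obtain ⟨i, hiR, hiS, hne⟩ := hxy
    have hB0 : B z y = 0 := by
      by_contra hb
      have := hB.1 z y hb i hiS
      rw [hz] at this; simp only [hiR, if_false] at this
      exact hne this
    have hA0 : A z' y = 0 := by
      by_contra ha
      have := hA.1 z' y ha i hiR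
      rw [hz'] at this; simp only [hiS, if_false] at this
      exact hne this
    rw [hB0, hA0, mul_zero, mul_zero]

lemma mul_unit_apply (C : Ops F) (m : ι) (a b : F m) (x y : Conf F) :
    (C * embedAt F m (fun p q => if p = a ∧ q = b then (1:ℂ) else 0)) x y
      = (if y m = b then (1:ℂ) else 0) * C x (Function.update y m a) := by
  rw [Matrix.mul_apply]
  rw [Finset.sum_eq_single (Function.update y m a)]
  · unfold embedAt
    have h1 : ∀ j, j ≠ m → Function.update y m a j = y j := fun j hj =>
      Function.update_of_ne hj a y
    simp only [h1, implies_true, if_true, Function.update_self, true_and]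
    split_ifs with hh
    · simp [hh]
    · simp [hh]
  · intro w _ hw
    unfold embedAt
    by_cases h1 : ∀ j, j ≠ m → w j = y j
    · by_cases h2 : w m = a
      · exfalso; apply hw
        funext j
        by_cases hj : j = m
        · subst hj; rw [Function.update_self]; exact h2
        · rw [Function.update_of_ne hj]; exact h1 j hj
      · simp [h2]
    · simp [h1]
  · intro hnot; exact absurd (Finset.mem_univ _) hnot

lemma unit_mul_apply (C : Ops F) (m : ι) (a b : F m) (x y : Conf F) :
    (embedAt F m (fun p q => if p = a ∧ q = b then (1:ℂ) else 0) * C) x y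
      = (if x m = a then (1:ℂ) else 0) * C (Function.update x m b) y := by
  rw [Matrix.mul_apply]
  rw [Finset.sum_eq_single (Function.update x m b)]
  · unfold embedAt
    have h1 : ∀ j, j ≠ m → x j = Function.update x m b j := fun j hj =>
      (Function.update_of_ne hj b x).symm
    simp only [h1, implies_true, if_true, Function.update_self, and_true]
    split_ifs with hh
    · simp [hh]
    · simp [hh]
  · intro w _ hw
    unfold embedAt
    by_cases h1 : ∀ j, j ≠ m → x j = w j
    · by_cases h2 : w m = b
      · exfalso; apply hw
        funext j
        by_cases hj : j = m
        · subst hj; rw [Function.update_self]; exact h2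
        · rw [Function.update_of_ne hj]; exact (h1 j hj).symm
      · simp [h2]
    · simp [h1]
  · intro hnot; exact absurd (Finset.mem_univ _) hnot

lemma localized_of_commute (C : Ops F) (R : Set ι)
    (h : ∀ m, m ∉ R → ∀ B : Matrix (F m) (F m) ℂ,
      C * embedAt F m B = embedAt F m B * C) :
    Localized F C R := by
  classical
  have key : ∀ m, m ∉ R → ∀ (a b : F m) (x y : Conf F),
      (if y m = b then (1:ℂ) else 0) * C x (Function.update y m a)
        = (if x m = a then (1:ℂ) else 0) * C (Function.update x m b) y := by
    intro m hm a b x y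
    have := congrFun (congrFun (h m hm (fun p q => if p = a ∧ q = b then (1:ℂ) else 0)) x) y
    rw [mul_unit_apply, unit_mul_apply] at this
    exact this
  have propA : ∀ x y : Conf F, C x y ≠ 0 → ∀ i, i ∉ R → x i = y i := by
    intro x y hC i hi
    by_contra hne
    have := key i hi (x i) (x i) x y
    rw [if_neg (fun hh => hne hh.symm), if_pos rfl, zero_mul, one_mul,
      Function.update_eq_self] at this
    exact hC this.symm
  have step : ∀ m, m ∉ R → ∀ (x y : Conf F) (c : F m), x m = y m →
      C (Function.update x m c) (Function.update y m c) = C x y := by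
    intro m hm x y c hxy
    have := key m hm (x m) c x (Function.update y m c)
    rw [Function.update_self, if_pos rfl, if_pos rfl, one_mul, one_mul,
      Function.update_idem] at this
    rw [hxy, Function.update_eq_self] at this
    exact this.symm
  have main : ∀ T : Finset ι, (∀ i ∈ T, i ∉ R) → ∀ x y : Conf F,
      (∀ i ∈ T, x i = y i) → ∀ s : Conf F,
      C (fun i => if i ∈ T then s i else x i) (fun i => if i ∈ T then s i else y i)
        = C x y := by
    intro T
    induction T using Finset.induction_on with
    | empty => intro _ x y _ s; simp
    | @insert j T hj ih =>
      intro hT x y hxy s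
      have e1 : (fun i => if i ∈ insert j T then s i else x i)
          = Function.update (fun i => if i ∈ T then s i else x i) j (s j) := by
        funext i
        by_cases hij : i = j
        · subst hij; simp [hj]
        · simp [Function.update_of_ne hij, Finset.mem_insert, hij]
      have e2 : (fun i => if i ∈ insert j T then s i else y i)
          = Function.update (fun i => if i ∈ T then s i else y i) j (s j) := by
        funext i
        by_cases hij : i = j
        · subst hij; simp [hj]
        · simp [Function.update_of_ne hij, Finset.mem_insert, hij]
      rw [e1, e2, step j (hT j (Finset.mem_insert_self j T)) _ _ (s j)
        (by simp only [hj, if_neg hj]; exact hxy j (Finset.mem_insert_self j T))]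
      exact ih (fun i hi => hT i (Finset.mem_insert_of_mem hi)) x y
        (fun i hi => hxy i (Finset.mem_insert_of_mem hi)) s
  refine ⟨propA, ?_⟩
  intro x y x' y' hx hy hxy hxy'
  set T : Finset ι := Finset.univ.filter (fun i => i ∉ R) with hTdef
  have hT : ∀ i ∈ T, i ∉ R := by intro i hi; simpa [hTdef] using hi
  have hmemT : ∀ i, i ∉ R → i ∈ T := by intro i hi; simp [hTdef, hi]
  have e1 : (fun i => if i ∈ T then x' i else x i) = x' := by
    funext i
    by_cases hiR : i ∈ R
    · have : i ∉ T := fun ht => hT i ht hiR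
      simp only [this, if_neg this]; exact hx i hiR
    · simp [hmemT i hiR]
  have e2 : (fun i => if i ∈ T then x' i else y i) = y' := by
    funext i
    by_cases hiR : i ∈ R
    · have : i ∉ T := fun ht => hT i ht hiR
      simp only [this, if_neg this]; exact hy i hiR
    · rw [if_pos (hmemT i hiR)]; exact hxy' i hiR
  have := main T hT x y (fun i hi => hxy i (hT i hi)) x'
  rw [e1, e2] at this
  exact this.symm

end Aux

/-- If a unitary on a finite lattice of qudits is locality preserving for
the neighbourhood map `Nbr` (i.e. `U* A U` is localized on `Nbr n` whenever `A` is localized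
on site `n`), then its inverse is locality preserving for the transposed neighbourhood map
`n ↦ {m | n ∈ Nbr m}`. -/
theorem inverse_locality_preserving (Λ : Type) [Fintype Λ] [DecidableEq Λ]
    (d : Λ → ℕ) (hd : ∀ i, 1 ≤ d i) (Nbr : Λ → Set Λ)
    (U : Ops (fun i : Λ => Fin (d i)))
    (hU : U ∈ Matrix.unitaryGroup (Conf (fun i : Λ => Fin (d i))) ℂ)
    (h : ∀ (n : Λ) (A : Ops (fun i : Λ => Fin (d i))),
      Localized (fun i : Λ => Fin (d i)) A ({n} : Set Λ) →
      Localized (fun i : Λ => Fin (d i)) (star U * A * U) (Nbr n)) :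
    ∀ (n : Λ) (A : Ops (fun i : Λ => Fin (d i))),
      Localized (fun i : Λ => Fin (d i)) A ({n} : Set Λ) →
      Localized (fun i : Λ => Fin (d i)) (U * A * star U) {m : Λ | n ∈ Nbr m} := by
  intro n A hA
  have h2 : U * star U = 1 := Matrix.mem_unitaryGroup_iff.mp hU
  apply localized_of_commute
  intro m hm B
  have hmn : n ∉ Nbr m := by simpa using hm
  set E := embedAt (fun i : Λ => Fin (d i)) m B with hE
  have hB := localized_embedAt (fun i : Λ => Fin (d i)) m B
  have hUB := h m E hB
  have hcomm : A * (star U * E * U) = (star U * E * U) * A :=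
    mul_comm_of_disjoint _ A _ ({n} : Set Λ) (Nbr m) hA hUB
      (fun i hi => hmn (by rcases hi with ⟨hi1, hi2⟩; rwa [Set.mem_singleton_iff.mp hi1] at hi2))
  have e1 : U * A * star U * E = U * (A * (star U * E * U)) * star U := by
    simp only [← mul_assoc]
    rw [mul_assoc (U * A * star U * E) U (star U), h2, mul_one]
  have e2 : E * (U * A * star U) = U * (star U * E * U * A) * star U := by
    simp only [← mul_assoc]
    rw [show U * star U * E * U * A * star U = U * star U * (E * U * A * star U) by
      simp only [← mul_assoc], h2, one_mul]
  calc U * A * star U * E = U * (A * (star U * E * U)) * star U := e1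
    _ = U * (star U * E * U * A) * star U := by rw [hcomm]
    _ = E * (U * A * star U) := e2.symm

end QCA
end

section
/- Let H, A, B be D × D complex matrices. Suppose there exists T > 0 such that the commutator [B, e^{itH} A e^{−itH}] = 0 for all real t with 0 ≤ t < T. Then [B, e^{itH} A e^{−itH}] = 0 for all t ∈ ℝ. In particular, if an operator evolving under continuous-time matrix dynamics commutes with B during any short initial time interval, it commutes with B for all times. -/
open scoped Kronecker

namespace QCA

variable {ι : Type} [Fintype ι] [DecidableEq ι]
variable (F : ι → Type) [∀ i, Fintype (F i)] [∀ i, DecidableEq (F i)]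

/-- The Heisenberg evolution `e^{itH} A e^{-itH}` of a matrix `A` under the continuous-time
dynamics generated by `H`. -/
noncomputable def heisenbergAt (D : ℕ) (H A : Matrix (Fin D) (Fin D) ℂ) (t : ℝ) :
    Matrix (Fin D) (Fin D) ℂ :=
  NormedSpace.exp (((t : ℂ) * Complex.I) • H) * A *
    NormedSpace.exp ((-((t : ℂ) * Complex.I)) • H)

attribute [local instance] Matrix.linftyOpNormedRing Matrix.linftyOpNormedAlgebra

/-- If `[B, e^{itH} A e^{-itH}] = 0` for all `0 ≤ t < T` (some `T > 0`),
then `[B, e^{itH} A e^{-itH}] = 0` for all real `t`: an operator commuting with `B` during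
any short initial time interval of continuous-time matrix dynamics commutes with `B`
forever. -/
theorem commute_briefly_commute_forever (D : ℕ) (H A B : Matrix (Fin D) (Fin D) ℂ)
    (T : ℝ) (hT : 0 < T)
    (h : ∀ t : ℝ, 0 ≤ t → t < T →
      B * heisenbergAt D H A t - heisenbergAt D H A t * B = 0) :
    ∀ t : ℝ, B * heisenbergAt D H A t - heisenbergAt D H A t * B = 0 := by
  set M : Matrix (Fin D) (Fin D) ℂ := Complex.I • H with hM
  set g : ℂ → Matrix (Fin D) (Fin D) ℂ := fun z =>
    B * (NormedSpace.exp (z • M) * A * NormedSpace.exp ((-z) • M)) -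
      (NormedSpace.exp (z • M) * A * NormedSpace.exp ((-z) • M)) * B with hg
  have hheis : ∀ t : ℝ, heisenbergAt D H A t =
      NormedSpace.exp (((t : ℂ)) • M) * A * NormedSpace.exp ((-(t : ℂ)) • M) := by
    intro t
    simp only [heisenbergAt, hM, smul_smul, neg_mul]
  have hgr : ∀ t : ℝ, g ((t : ℂ)) =
      B * heisenbergAt D H A t - heisenbergAt D H A t * B := by
    intro t; rw [hheis t]
  have hexp : Differentiable ℂ (fun z : ℂ => NormedSpace.exp (z • M)) := fun z =>
    (hasDerivAt_exp_smul_const M z).differentiableAt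
  have hexp' : Differentiable ℂ (fun z : ℂ => NormedSpace.exp ((-z) • M)) :=
    hexp.comp differentiable_neg
  have hgd : Differentiable ℂ g := by
    have : Differentiable ℂ (fun z : ℂ =>
        NormedSpace.exp (z • M) * A * NormedSpace.exp ((-z) • M)) :=
      (hexp.mul (differentiable_const A)).mul hexp'
    exact ((differentiable_const B).mul this).sub (this.mul (differentiable_const B))
  -- frequent zeros near 0
  have hseq : Filter.Tendsto (fun n : ℕ => ((min T 1 / (n + 2) : ℝ) : ℂ)) Filter.atTop (nhdsWithin 0 {(0:ℂ)}ᶜ) := by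
    have hc : 0 < min T 1 := lt_min hT one_pos
    have hat : Filter.Tendsto (fun n : ℕ => ((n : ℝ) + 2)) Filter.atTop Filter.atTop :=
      Filter.tendsto_atTop_add_const_right _ 2 tendsto_natCast_atTop_atTop
    have h1 : Filter.Tendsto (fun n : ℕ => (min T 1 / (n + 2) : ℝ)) Filter.atTop (nhds 0) :=
      hat.const_div_atTop _
    have h2 : Filter.Tendsto (fun n : ℕ => ((min T 1 / (n + 2) : ℝ) : ℂ)) Filter.atTop (nhds 0) := by
      have h2' := (Complex.continuous_ofReal.tendsto 0).comp h1
      rw [Complex.ofReal_zero] at h2'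
      exact h2'
    refine tendsto_nhdsWithin_of_tendsto_nhds_of_eventually_within _ h2 ?_
    refine Filter.Eventually.of_forall fun n => ?_
    have : (min T 1 / (n + 2) : ℝ) ≠ 0 :=
      ne_of_gt (div_pos hc (by positivity))
    simp only [Set.mem_compl_iff, Set.mem_singleton_iff]
    exact Complex.ofReal_ne_zero.mpr this
  have hfreq : ∀ i j : Fin D, ∃ᶠ z in nhdsWithin 0 {(0:ℂ)}ᶜ, g z i j = 0 := by
    intro i j
    refine hseq.frequently (Filter.Frequently.of_forall fun n => ?_)
    have hc : 0 < min T 1 := lt_min hT one_pos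
    have hpos : 0 < (min T 1 / (n + 2) : ℝ) := div_pos hc (by positivity)
    have hlt : (min T 1 / (n + 2) : ℝ) < T := by
      have h2 : (min T 1 / (n + 2) : ℝ) < min T 1 :=
        div_lt_self hc (by linarith [Nat.cast_nonneg (α := ℝ) n])
      exact h2.trans_le (min_le_left _ _)
    have := h _ hpos.le hlt
    have := hgr (min T 1 / (n + 2))
    rw [h _ hpos.le hlt] at this
    exact congrFun (congrFun this i) j
  intro t
  rw [← hgr t]
  ext i j
  have hA : AnalyticOnNhd ℂ (fun z => g z i j) Set.univ := by
    rw [Complex.analyticOnNhd_univ_iff_differentiable]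
    exact (ContinuousLinearMap.differentiable
      (LinearMap.toContinuousLinearMap (Matrix.entryLinearMap ℂ ℂ i j))).comp hgd
  have := hA.eqOn_zero_of_preconnected_of_frequently_eq_zero isPreconnected_univ
    (Set.mem_univ 0) (hfreq i j)
  simpa using this (Set.mem_univ ((t : ℂ)))


end QCA
end

section
/- Let N ≥ 5 and index the qubits of (ℂ²)^{⊗N} by ℤ/N, with X_n, Y_n, Z_n the Pauli operators acting on site n. There exists a unitary U on (ℂ²)^{⊗N} such that for every n, U* X_n U = Z_n and U* Z_n U = Z_{n−1} X_n Z_{n+1}. Moreover any such U has gliders: U* (X_n Z_{n+1}) U = X_{n+1} Z_{n+2} (a right-mover) and U* (Z_n X_{n+1}) U = Z_{n−1} X_n (a left-mover) for every n. -/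
open scoped Kronecker

namespace QCA

variable {ι : Type} [Fintype ι] [DecidableEq ι]
variable (F : ι → Type) [∀ i, Fintype (F i)] [∀ i, DecidableEq (F i)]

/-- The Pauli matrix `X`. -/
noncomputable def pauliX : Matrix (Fin 2) (Fin 2) ℂ := !![0, 1; 1, 0]

/-- The Pauli matrix `Z`. -/
noncomputable def pauliZ : Matrix (Fin 2) (Fin 2) ℂ := !![1, 0; 0, -1]

/-- The Pauli `X` operator at site `n` of a ring of `N` qubits. -/
noncomputable def Xop (N : ℕ) [NeZero N] (n : ZMod N) : Ops (fun _ : ZMod N => Fin 2) :=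
  embedAt (fun _ : ZMod N => Fin 2) n pauliX

/-- The Pauli `Z` operator at site `n` of a ring of `N` qubits. -/
noncomputable def Zop (N : ℕ) [NeZero N] (n : ZMod N) : Ops (fun _ : ZMod N => Fin 2) :=
  embedAt (fun _ : ZMod N => Fin 2) n pauliZ


/-! ### Auxiliary machinery for Statement 18 -/

private lemma zmod2_cases : ∀ a : ZMod 2, a = 0 ∨ a = 1 := by decide
private lemma zmod2_add_self : ∀ a : ZMod 2, a + a = 0 := by decide
private lemma zmod2_rearr : ∀ a b c : ZMod 2, a + b = c → a = b + c := by decide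
private lemma zmod2_rearr2 : ∀ a b c d : ZMod 2, a + b = c + d → a = b + (c + d) := by decide

/-- `Fin 2` as `ZMod 2`. -/
def m2 (a : Fin 2) : ZMod 2 := (a.val : ZMod 2)

private lemma m2_add_one : ∀ a : Fin 2, m2 (a + 1) = m2 a + 1 := by decide
private lemma m2_add_eq_zero : ∀ a b : Fin 2, m2 a + m2 b = 0 → a = b := by decide
private lemma fin2_add_one_add_one : ∀ a : Fin 2, a + 1 + 1 = a := by decide
private lemma m2_key : ∀ a b : ZMod 2, (a + 1) * b + a * b = b := by decide
private lemma m2_key' : ∀ a b : ZMod 2, b * (a + 1) + b * a = b := by decide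

/-- The sign character of `ZMod 2`. -/
noncomputable def chi (a : ZMod 2) : ℂ := if a = 0 then 1 else -1

lemma chi_zero : chi 0 = 1 := if_pos rfl

lemma chi_add (a b : ZMod 2) : chi (a + b) = chi a * chi b := by
  rcases zmod2_cases a with rfl | rfl <;> rcases zmod2_cases b with rfl | rfl <;>
    simp [chi, show (1 + 1 : ZMod 2) = 0 from by decide, show (1 : ZMod 2) ≠ 0 from by decide]

lemma chi_mul_self (a : ZMod 2) : chi a * chi a = 1 := by
  rcases zmod2_cases a with rfl | rfl <;>
    simp [chi, show (1 : ZMod 2) ≠ 0 from by decide]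

lemma chi_conj (a : ZMod 2) : (starRingEnd ℂ) (chi a) = chi a := by
  rcases zmod2_cases a with rfl | rfl <;> simp [chi]

lemma chi_sum {α : Type*} (s : Finset α) (f : α → ZMod 2) :
    chi (∑ i ∈ s, f i) = ∏ i ∈ s, chi (f i) := by
  classical
  induction s using Finset.induction with
  | empty => simp [chi_zero]
  | @insert a s' ha ih => rw [Finset.sum_insert ha, Finset.prod_insert ha, chi_add, ih]

section Core

variable {N : ℕ} [NeZero N]

/-- Flip the bit at site `n`. -/
def flipc (n : ZMod N) (x : ZMod N → Fin 2) : ZMod N → Fin 2 :=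
  Function.update x n (x n + 1)

omit [NeZero N] in
lemma flipc_self (n : ZMod N) (x : ZMod N → Fin 2) : flipc n x n = x n + 1 :=
  Function.update_self n _ x

omit [NeZero N] in
lemma flipc_ne (n : ZMod N) (x : ZMod N → Fin 2) {j : ZMod N} (h : j ≠ n) :
    flipc n x j = x j := Function.update_of_ne h _ x

omit [NeZero N] in
lemma flipc_flipc (n : ZMod N) (x : ZMod N → Fin 2) : flipc n (flipc n x) = x := by
  funext j
  by_cases h : j = n
  · subst h; rw [flipc_self, flipc_self, fin2_add_one_add_one]
  · rw [flipc_ne n _ h, flipc_ne n _ h]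

omit [NeZero N] in
lemma eq_flipc_comm (n : ZMod N) (x y : ZMod N → Fin 2) :
    y = flipc n x ↔ x = flipc n y := by
  constructor <;> rintro rfl <;> rw [flipc_flipc]

/-- The bilinear form `∑ xᵢ yᵢ` mod 2. -/
def epf (x y : ZMod N → Fin 2) : ZMod 2 := ∑ i, m2 (x i) * m2 (y i)

/-- The quadratic form `∑ yᵢ y_{i+1}` mod 2. -/
def qf (y : ZMod N → Fin 2) : ZMod 2 := ∑ i, m2 (y i) * m2 (y (i + 1))

lemma epf_flip_left (n : ZMod N) (x y : ZMod N → Fin 2) :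
    epf (flipc n x) y = epf x y + m2 (y n) := by
  have key : epf (flipc n x) y + epf x y = m2 (y n) := by
    rw [epf, epf, ← Finset.sum_add_distrib, Finset.sum_eq_single n]
    · rw [flipc_self, m2_add_one]; exact m2_key _ _
    · intro b _ hb
      rw [flipc_ne n x hb]; exact zmod2_add_self _
    · intro h; exact absurd (Finset.mem_univ n) h
  exact zmod2_rearr _ _ _ key

lemma epf_flip_right (n : ZMod N) (x y : ZMod N → Fin 2) :
    epf x (flipc n y) = epf x y + m2 (x n) := by
  have key : epf x (flipc n y) + epf x y = m2 (x n) := by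
    rw [epf, epf, ← Finset.sum_add_distrib, Finset.sum_eq_single n]
    · rw [flipc_self, m2_add_one]; exact m2_key' _ _
    · intro b _ hb
      rw [flipc_ne n y hb]; exact zmod2_add_self _
    · intro h; exact absurd (Finset.mem_univ n) h
  exact zmod2_rearr _ _ _ key

lemma qf_flip (hone : (1 : ZMod N) ≠ 0) (n : ZMod N) (y : ZMod N → Fin 2) :
    qf (flipc n y) = qf y + (m2 (y (n + 1)) + m2 (y (n - 1))) := by
  have hsub : n - 1 ≠ n := fun h => hone (by linear_combination -h)
  have hadd : n + 1 ≠ n := fun h => hone (by linear_combination h)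
  have key : qf (flipc n y) + qf y = m2 (y (n + 1)) + m2 (y (n - 1)) := by
    rw [qf, qf, ← Finset.sum_add_distrib]
    have hrw : ∀ i : ZMod N,
        m2 (flipc n y i) * m2 (flipc n y (i + 1)) + m2 (y i) * m2 (y (i + 1))
          = (if i = n then m2 (y (n + 1)) else 0) + (if i = n - 1 then m2 (y (n - 1)) else 0) := by
      intro i
      by_cases hi : i = n
      · rw [hi, if_pos rfl, if_neg (fun hc : n = n - 1 => hsub hc.symm), add_zero,
          flipc_self, flipc_ne n y hadd, m2_add_one]
        exact m2_key _ _
      · by_cases hi' : i = n - 1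
        · subst hi'
          rw [if_neg hi, if_pos rfl, zero_add, flipc_ne n y hi,
            show n - 1 + 1 = n from by ring, flipc_self, m2_add_one]
          exact m2_key' _ _
        · rw [if_neg hi, if_neg hi', add_zero, flipc_ne n y hi,
            flipc_ne n y (fun hc : i + 1 = n => hi' (by linear_combination hc))]
          exact zmod2_add_self _
    rw [Finset.sum_congr rfl (fun i _ => hrw i), Finset.sum_add_distrib,
      Fintype.sum_ite_eq' n (fun _ => m2 (y (n + 1))),
      Fintype.sum_ite_eq' (n - 1) (fun _ => m2 (y (n - 1)))]
  exact zmod2_rearr2 _ _ _ _ key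

/-- The normalization constant `(√2)^{-N}`. -/
noncomputable def cnorm (N : ℕ) : ℂ := (((Real.sqrt 2 : ℝ) : ℂ))⁻¹ ^ N

lemma cnorm_conj : (starRingEnd ℂ) (cnorm N) = cnorm N := by
  rw [cnorm, map_pow, map_inv₀, Complex.conj_ofReal]

lemma cnorm_sq (hN : (N : ℕ) ≠ 0 ∨ True) : cnorm N * cnorm N * (2 : ℂ) ^ N = 1 := by
  have h2 : ((Real.sqrt 2 : ℝ) : ℂ) * ((Real.sqrt 2 : ℝ) : ℂ) = 2 := by
    rw [← Complex.ofReal_mul, Real.mul_self_sqrt (by norm_num)]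
    norm_num
  rw [cnorm, ← mul_pow, ← mul_pow, ← mul_inv, h2,
    inv_mul_cancel₀ (by norm_num : (2 : ℂ) ≠ 0), one_pow]

/-- The explicit Clifford QCA unitary: `H^{⊗N}` followed by a product of `CZ` gates. -/
noncomputable def Umat (N : ℕ) [NeZero N] : Ops (fun _ : ZMod N => Fin 2) :=
  fun x y => cnorm N * chi (epf x y + qf y)

lemma Umat_apply (x y : ZMod N → Fin 2) :
    Umat N x y = cnorm N * chi (epf x y + qf y) := rfl

lemma Umat_flip_left (n : ZMod N) (x y : ZMod N → Fin 2) :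
    Umat N (flipc n x) y = chi (m2 (y n)) * Umat N x y := by
  rw [Umat_apply, Umat_apply, epf_flip_left,
    show epf x y + m2 (y n) + qf y = m2 (y n) + (epf x y + qf y) from by ring, chi_add]
  ring

lemma Umat_flip_right (hone : (1 : ZMod N) ≠ 0) (n : ZMod N) (x y : ZMod N → Fin 2) :
    Umat N x (flipc n y)
      = chi (m2 (x n)) * chi (m2 (y (n + 1))) * chi (m2 (y (n - 1))) * Umat N x y := by
  rw [Umat_apply, Umat_apply, epf_flip_right, qf_flip hone,
    show epf x y + m2 (x n) + (qf y + (m2 (y (n + 1)) + m2 (y (n - 1))))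
        = m2 (x n) + (m2 (y (n + 1)) + (m2 (y (n - 1)) + (epf x y + qf y))) from by ring,
    chi_add, chi_add, chi_add]
  ring

/-- `pauliX` entrywise. -/
lemma pauliX_apply (a b : Fin 2) : pauliX a b = if b = a + 1 then 1 else 0 := by
  fin_cases a <;> fin_cases b <;> simp [pauliX] <;> norm_num

/-- `pauliZ` entrywise. -/
lemma pauliZ_apply (a b : Fin 2) : pauliZ a b = if b = a then chi (m2 a) else 0 := by
  fin_cases a <;> fin_cases b <;> simp [pauliZ, chi, m2] <;> norm_num

lemma Xop_apply (n : ZMod N) (x y : ZMod N → Fin 2) :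
    Xop N n x y = if y = flipc n x then 1 else 0 := by
  show (if ∀ j, j ≠ n → x j = y j then 1 else 0) * pauliX (x n) (y n) = _
  rw [pauliX_apply]
  by_cases h : y = flipc n x
  · subst h
    rw [if_pos fun j hj => (flipc_ne n x hj).symm, if_pos (flipc_self n x), one_mul]
    exact (if_pos rfl).symm
  · by_cases h2 : ∀ j, j ≠ n → x j = y j
    · rw [if_pos h2, one_mul, if_neg, if_neg h]
      intro hc
      apply h
      funext j
      by_cases hj : j = n
      · subst hj; rw [flipc_self]; exact hc
      · rw [flipc_ne n x hj]; exact (h2 j hj).symm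
    · rw [if_neg h2, zero_mul, if_neg h]

lemma Zop_diag (n : ZMod N) :
    Zop N n = Matrix.diagonal (fun x : ZMod N → Fin 2 => chi (m2 (x n))) := by
  ext x y
  show (if ∀ j, j ≠ n → x j = y j then 1 else 0) * pauliZ (x n) (y n) = _
  rw [pauliZ_apply, Matrix.diagonal_apply]
  by_cases h : x = y
  · subst h
    rw [if_pos fun j _ => rfl, if_pos rfl, if_pos rfl, one_mul]
  · rw [if_neg h]
    by_cases h2 : ∀ j, j ≠ n → x j = y j
    · rw [if_pos h2, one_mul, if_neg]
      intro hc
      apply h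
      funext j
      by_cases hj : j = n
      · subst hj; exact hc.symm
      · exact h2 j hj
    · rw [if_neg h2, zero_mul]

lemma Xmul_apply (n : ZMod N) (A : Ops (fun _ : ZMod N => Fin 2)) (x y : ZMod N → Fin 2) :
    (Xop N n * A) x y = A (flipc n x) y := by
  rw [Matrix.mul_apply, Finset.sum_eq_single (flipc n x)]
  · rw [Xop_apply, if_pos rfl, one_mul]
  · intro z _ hz
    rw [Xop_apply, if_neg hz, zero_mul]
  · intro h; exact absurd (Finset.mem_univ _) h

lemma mulX_apply (n : ZMod N) (A : Ops (fun _ : ZMod N => Fin 2)) (x y : ZMod N → Fin 2) :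
    (A * Xop N n) x y = A x (flipc n y) := by
  rw [Matrix.mul_apply, Finset.sum_eq_single (flipc n y)]
  · rw [Xop_apply, if_pos ((eq_flipc_comm n _ _).mpr rfl), mul_one]
  · intro z _ hz
    rw [Xop_apply, if_neg (fun hc => hz ((eq_flipc_comm n z y).mp hc)), mul_zero]
  · intro h; exact absurd (Finset.mem_univ _) h

lemma Zmul_apply (n : ZMod N) (A : Ops (fun _ : ZMod N => Fin 2)) (x y : ZMod N → Fin 2) :
    (Zop N n * A) x y = chi (m2 (x n)) * A x y := by
  rw [Zop_diag, Matrix.diagonal_mul]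

lemma mulZ_apply (n : ZMod N) (A : Ops (fun _ : ZMod N => Fin 2)) (x y : ZMod N → Fin 2) :
    (A * Zop N n) x y = A x y * chi (m2 (y n)) := by
  rw [Zop_diag, Matrix.mul_diagonal]

lemma Zop_sq (n : ZMod N) : Zop N n * Zop N n = 1 := by
  rw [Zop_diag, Matrix.diagonal_mul_diagonal]
  have : (fun i : ZMod N → Fin 2 => chi (m2 (i n)) * chi (m2 (i n))) = fun _ => (1 : ℂ) := by
    funext i; exact chi_mul_self _
  rw [this, Matrix.diagonal_one]

/-- Orthogonality of characters. -/
lemma chi_orth (x y : ZMod N → Fin 2) :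
    ∑ z : ZMod N → Fin 2, chi (epf z x) * chi (epf z y)
      = if x = y then (2 : ℂ) ^ N else 0 := by
  classical
  have step1 : ∀ z : ZMod N → Fin 2,
      chi (epf z x) * chi (epf z y) = ∏ i, chi (m2 (z i) * (m2 (x i) + m2 (y i))) := by
    intro z
    rw [← chi_add, epf, epf, ← Finset.sum_add_distrib, chi_sum]
    exact Finset.prod_congr rfl fun i _ => by rw [mul_add]
  rw [Finset.sum_congr rfl fun z _ => step1 z,
    ← Fintype.prod_sum (fun (i : ZMod N) (b : Fin 2) => chi (m2 b * (m2 (x i) + m2 (y i))))]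
  have site : ∀ d : ZMod 2,
      (∑ b : Fin 2, chi (m2 b * d)) = if d = 0 then 2 else 0 := by
    intro d
    rw [Fin.sum_univ_two, show m2 (0 : Fin 2) = 0 from rfl, show m2 (1 : Fin 2) = 1 from rfl,
      zero_mul, one_mul, chi_zero]
    rcases zmod2_cases d with rfl | rfl
    · rw [if_pos rfl, chi_zero]; norm_num
    · have h1 : chi 1 = -1 := by
        simp [chi, show (1 : ZMod 2) ≠ 0 from by decide]
      rw [if_neg (by decide), h1]; ring
  by_cases hxy : x = y
  · subst hxy
    rw [if_pos rfl]
    have : ∀ i : ZMod N, (∑ b : Fin 2, chi (m2 b * (m2 (x i) + m2 (x i)))) = 2 := by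
      intro i; rw [site, if_pos (zmod2_add_self _)]
    rw [Finset.prod_congr rfl fun i _ => this i, Finset.prod_const, Finset.card_univ,
      ZMod.card]
  · rw [if_neg hxy]
    obtain ⟨i, hi⟩ : ∃ i, x i ≠ y i := by
      by_contra hc
      push_neg at hc
      exact hxy (funext hc)
    refine Finset.prod_eq_zero (Finset.mem_univ i) ?_
    rw [site, if_neg (fun hc => hi (m2_add_eq_zero _ _ hc))]

lemma Umat_unitary : Umat N ∈ Matrix.unitaryGroup (ZMod N → Fin 2) ℂ := by
  rw [Matrix.mem_unitaryGroup_iff']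
  ext x y
  rw [Matrix.mul_apply]
  have step : ∀ z : ZMod N → Fin 2,
      (star (Umat N)) x z * Umat N z y
        = (cnorm N * cnorm N * (chi (qf x) * chi (qf y)))
            * (chi (epf z x) * chi (epf z y)) := by
    intro z
    rw [Matrix.star_apply, Umat_apply, Umat_apply, chi_add, chi_add]
    simp only [star_mul', Complex.star_def, chi_conj, cnorm_conj]
    ring
  rw [Finset.sum_congr rfl fun z _ => step z, ← Finset.mul_sum, chi_orth]
  by_cases hxy : x = y
  · subst hxy
    rw [if_pos rfl, Matrix.one_apply_eq]
    calc cnorm N * cnorm N * (chi (qf x) * chi (qf x)) * (2 : ℂ) ^ N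
        = cnorm N * cnorm N * (2 : ℂ) ^ N * (chi (qf x) * chi (qf x)) := by ring
      _ = 1 := by rw [chi_mul_self, cnorm_sq (Or.inr trivial), mul_one]
  · rw [if_neg hxy, Matrix.one_apply_ne hxy, mul_zero]

lemma XU_eq (n : ZMod N) : Xop N n * Umat N = Umat N * Zop N n := by
  ext x y
  rw [Xmul_apply, mulZ_apply, Umat_flip_left]
  ring

lemma ZU_eq (hone : (1 : ZMod N) ≠ 0) (n : ZMod N) :
    Zop N n * Umat N = Umat N * (Zop N (n - 1) * Xop N n * Zop N (n + 1)) := by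
  have hsub : n - 1 ≠ n := fun h => hone (by linear_combination -h)
  ext x y
  rw [Zmul_apply, show Umat N * (Zop N (n - 1) * Xop N n * Zop N (n + 1))
      = ((Umat N * Zop N (n - 1)) * Xop N n) * Zop N (n + 1) from by
        simp only [mul_assoc],
    mulZ_apply, mulX_apply, mulZ_apply, flipc_ne n y hsub,
    Umat_flip_right hone]
  have key : chi (m2 (x n)) * chi (m2 (y (n + 1))) * chi (m2 (y (n - 1))) * Umat N x y
        * chi (m2 (y (n - 1))) * chi (m2 (y (n + 1)))
      = chi (m2 (x n)) * Umat N x y := by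
    calc chi (m2 (x n)) * chi (m2 (y (n + 1))) * chi (m2 (y (n - 1))) * Umat N x y
          * chi (m2 (y (n - 1))) * chi (m2 (y (n + 1)))
        = chi (m2 (x n)) * Umat N x y
          * ((chi (m2 (y (n + 1))) * chi (m2 (y (n + 1))))
            * (chi (m2 (y (n - 1))) * chi (m2 (y (n - 1))))) := by ring
      _ = chi (m2 (x n)) * Umat N x y := by rw [chi_mul_self, chi_mul_self]; ring
  exact key.symm

end Core

/-- On a ring of `N ≥ 5` qubits there exists a (Clifford QCA) unitary `U`
with `U* Xₙ U = Zₙ` and `U* Zₙ U = Z_{n-1} Xₙ Z_{n+1}` for every `n`; moreover any such `U`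
has gliders: `U* (Xₙ Z_{n+1}) U = X_{n+1} Z_{n+2}` and `U* (Zₙ X_{n+1}) U = Z_{n-1} Xₙ`. -/
theorem clifford_qca_with_gliders (N : ℕ) [NeZero N] (hN : 5 ≤ N) :
    (∃ U ∈ Matrix.unitaryGroup (Conf (fun _ : ZMod N => Fin 2)) ℂ,
      ∀ n : ZMod N, star U * Xop N n * U = Zop N n ∧
        star U * Zop N n * U = Zop N (n - 1) * Xop N n * Zop N (n + 1)) ∧
    ∀ U ∈ Matrix.unitaryGroup (Conf (fun _ : ZMod N => Fin 2)) ℂ,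
      (∀ n : ZMod N, star U * Xop N n * U = Zop N n ∧
        star U * Zop N n * U = Zop N (n - 1) * Xop N n * Zop N (n + 1)) →
      ∀ n : ZMod N,
        star U * (Xop N n * Zop N (n + 1)) * U = Xop N (n + 1) * Zop N (n + 2) ∧
        star U * (Zop N n * Xop N (n + 1)) * U = Zop N (n - 1) * Xop N n := by
  haveI : Fact (1 < N) := ⟨by omega⟩
  have hone : (1 : ZMod N) ≠ 0 := one_ne_zero
  constructor
  · refine ⟨Umat N, Umat_unitary, fun n => ?_⟩
    have hU : star (Umat N) * Umat N = 1 := Matrix.mem_unitaryGroup_iff'.mp Umat_unitary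
    constructor
    · rw [mul_assoc, XU_eq, ← mul_assoc, hU, one_mul]
    · rw [mul_assoc, ZU_eq hone, ← mul_assoc, hU, one_mul]
  · intro U hU h n
    have h1 : star U * U = 1 := Matrix.mem_unitaryGroup_iff'.mp hU
    have h2 : U * star U = 1 := Matrix.mem_unitaryGroup_iff.mp hU
    have hmul : ∀ A B : Ops (fun _ : ZMod N => Fin 2),
        star U * (A * B) * U = (star U * A * U) * (star U * B * U) := by
      intro A B
      simp only [mul_assoc]
      rw [← mul_assoc U (star U) (B * U), h2, one_mul]
    constructor
    · rw [hmul, (h n).1, (h (n + 1)).2, show n + 1 - 1 = n from by ring,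
        show n + 1 + 1 = n + 2 from by ring,
        show Zop N n * (Zop N n * Xop N (n + 1) * Zop N (n + 2))
            = (Zop N n * Zop N n) * (Xop N (n + 1) * Zop N (n + 2)) from by
          simp only [mul_assoc],
        Zop_sq, one_mul]
    · rw [hmul, (h n).2, (h (n + 1)).1,
        mul_assoc (Zop N (n - 1) * Xop N n) (Zop N (n + 1)) (Zop N (n + 1)),
        Zop_sq, mul_one]

end QCA
end
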